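/- For 1 ≤ i ≤ n−1 and i < x ≤ n, define A(i,x) ⊆ Q_n as the union of: {(j,j+1) : 1 ≤ j ≤ i−1}; {(i,x), (i+1,x)}; {(i,k) : i+1 ≤ k ≤ x−1, k ≡ i+1 (mod 2)}; {(i+1,ℓ) : i+2 ≤ ℓ ≤ x−1, ℓ ≡ i (mod 2)}; and the tail {(i,k) : x+1 ≤ k ≤ n} if x ≡ i (mod 2), or {(i+1,k) : x+1 ≤ k ≤ n} if x ≢ i (mod 2). Then each A(i,x) is an antichain of cardinality n in (Q_n, ≺), and every antichain of cardinality n in (Q_n, ≺) equals {(1,k) : 1 ≤ k ≤ n} or equals A(i,x) for some such pair (i,x). -/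

import Mathlib

/-- Membership in `Q_n`: pairs `(i,k)` with `1 ≤ i ≤ k ≤ n`. -/
def Qmem (n : ℕ) (p : ℕ × ℕ) : Prop := 1 ≤ p.1 ∧ p.1 ≤ p.2 ∧ p.2 ≤ n

/-- The relation `≺₀` on `Q_n`. -/
def prec0 (n : ℕ) (p q : ℕ × ℕ) : Prop :=
  Qmem n p ∧ Qmem n q ∧ q.1 = p.1 + 1 ∧
  ( p.2 = p.1 ∨
    (∃ k : ℕ, 1 ≤ k ∧ p.2 = p.1 + 2 * k ∧ ∃ l < k, q.2 = p.1 + 1 + 2 * l) ∨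
    (∃ k : ℕ, 1 ≤ k ∧ p.2 = p.1 + 2 * k ∧ p.1 + 2 * k + 1 ≤ q.2) ∨
    (∃ k : ℕ, 1 ≤ k ∧ p.2 = p.1 + 2 * k + 1 ∧ ∃ l < k, q.2 = p.1 + 1 + 2 * l) )

/-- The relation `≺`, the transitive closure of `≺₀`. -/
def prec (n : ℕ) : ℕ × ℕ → ℕ × ℕ → Prop := Relation.TransGen (prec0 n)

/-- An antichain in `(Q_n, ≺)`: a subset of `Q_n` no two distinct elements
of which are related by `≺` (in either direction). -/
def IsPrecAntichain (n : ℕ) (A : Set (ℕ × ℕ)) : Prop :=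
  (∀ p ∈ A, Qmem n p) ∧ ∀ p ∈ A, ∀ q ∈ A, p ≠ q → ¬ prec n p q

/-- The antichain `A(i,x)` of the paper (candidate generalized tilting module in the
`i`-th tier): `{(j,j+1) : 1 ≤ j ≤ i-1} ∪ {(i,x),(i+1,x)}`, together with the elements
`(i,k)` for `i+1 ≤ k ≤ x-1` with `k ≡ i+1 (mod 2)`, the elements `(i+1,ℓ)` for
`i+2 ≤ ℓ ≤ x-1` with `ℓ ≡ i (mod 2)`, and the tail `(i,k)` (resp. `(i+1,k)`) for
`x+1 ≤ k ≤ n` when `x ≡ i (mod 2)` (resp. `x ≢ i (mod 2)`). -/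
def Afam (n i x : ℕ) : Set (ℕ × ℕ) :=
  {p : ℕ × ℕ | p.2 = p.1 + 1 ∧ 1 ≤ p.1 ∧ p.1 < i} ∪
  {(i, x), (i + 1, x)} ∪
  {p : ℕ × ℕ | p.1 = i ∧ i + 1 ≤ p.2 ∧ p.2 < x ∧ p.2 % 2 = (i + 1) % 2} ∪
  {p : ℕ × ℕ | p.1 = i + 1 ∧ i + 2 ≤ p.2 ∧ p.2 < x ∧ p.2 % 2 = i % 2} ∪
  (if x % 2 = i % 2 then {p : ℕ × ℕ | p.1 = i ∧ x + 1 ≤ p.2 ∧ p.2 ≤ n}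
   else {p : ℕ × ℕ | p.1 = i + 1 ∧ x + 1 ≤ p.2 ∧ p.2 ≤ n})

lemma prec0_nonfree {n : ℕ} {p q : ℕ × ℕ} (h : prec0 n p q) : p.2 ≠ p.1 + 1 := by
  obtain ⟨-, -, -, h⟩ := h
  rcases h with h | ⟨k, hk, h, -⟩ | ⟨k, hk, h, -⟩ | ⟨k, hk, h, -⟩ <;> omega

lemma prec_row {n : ℕ} {p q : ℕ × ℕ} (h : prec n p q) : p.1 < q.1 := by
  induction h with
  | single h => have := h.2.2.1; omega
  | tail _ h ih => have := h.2.2.1; omega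

lemma prec_nonfree {n : ℕ} {p q : ℕ × ℕ} (h : prec n p q) : p.2 ≠ p.1 + 1 := by
  induction h with
  | single h => exact prec0_nonfree h
  | tail h _ ih => exact ih

lemma prec_qmem_left {n : ℕ} {p q : ℕ × ℕ} (h : prec n p q) : Qmem n p := by
  induction h with
  | single h => exact h.1
  | tail h _ ih => exact ih

lemma prec_adj {n : ℕ} {p q : ℕ × ℕ} (h : prec n p q) (hq : q.1 = p.1 + 1) : prec0 n p q := by
  cases h with
  | single h => exact h
  | tail h h2 => have := prec_row h; have := h2.2.2.1; omega

lemma diag_prec {n : ℕ} : ∀ (d r : ℕ) (q : ℕ × ℕ), q.1 = r + d + 1 → 1 ≤ r → r ≤ n →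
    Qmem n q → prec n (r, r) q := by
  intro d
  induction d with
  | zero =>
    intro r q h1 h2 h3 hq
    exact Relation.TransGen.single ⟨⟨h2, le_refl _, h3⟩, hq, by simpa using h1, Or.inl rfl⟩
  | succ d ih =>
    intro r q h1 h2 h3 hq
    obtain ⟨ha, hb, hc⟩ := hq
    have hq : Qmem n q := ⟨ha, hb, hc⟩
    have hq2 : r + 1 ≤ n := by omega
    have hstep : prec0 n (r, r) (r + 1, r + 1) :=
      ⟨⟨h2, le_refl _, h3⟩, ⟨by omega, by omega, hq2⟩, rfl, Or.inl rfl⟩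
    exact Relation.TransGen.head hstep (ih (r + 1) q (by omega) (by omega) hq2 hq)

lemma prec_of_far {n : ℕ} {p q : ℕ × ℕ} (hp : Qmem n p) (hq : Qmem n q)
    (hfree : p.2 ≠ p.1 + 1) (hrow : p.1 + 2 ≤ q.1) : prec n p q := by
  obtain ⟨hp1, hp2, hp3⟩ := hp
  rcases Nat.eq_or_lt_of_le hp2 with heq | hlt
  · have hpp : p = (p.1, p.1) := by rw [Prod.ext_iff]; exact ⟨rfl, heq.symm⟩
    rw [hpp]
    exact diag_prec (q.1 - p.1 - 1) p.1 q (by omega) hp1 (by omega) hq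
  · -- p.2 ≥ p.1 + 2
    have hn1 : p.1 + 1 ≤ n := by obtain ⟨a, b, c⟩ := hq; omega
    have hstep : prec0 n p (p.1 + 1, p.1 + 1) := by
      refine ⟨⟨hp1, hp2, hp3⟩, ⟨by omega, le_refl _, hn1⟩, by simp, ?_⟩
      rcases Nat.even_or_odd (p.2 - p.1) with ⟨m, hm⟩ | ⟨m, hm⟩
      · exact Or.inr (Or.inl ⟨m, by omega, by omega, 0, by omega, rfl⟩)
      · exact Or.inr (Or.inr (Or.inr ⟨m, by omega, by omega, 0, by omega, rfl⟩))
    exact Relation.TransGen.head hstep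
      (diag_prec (q.1 - p.1 - 2) (p.1 + 1) q (by omega) (by omega) hn1 hq)


lemma afam_mem {n i x : ℕ} {p : ℕ × ℕ} :
    p ∈ Afam n i x ↔
      (p.2 = p.1 + 1 ∧ 1 ≤ p.1 ∧ p.1 < i) ∨
      (p.1 = i ∧ p.2 = x) ∨ (p.1 = i + 1 ∧ p.2 = x) ∨
      (p.1 = i ∧ i + 1 ≤ p.2 ∧ p.2 < x ∧ p.2 % 2 = (i + 1) % 2) ∨
      (p.1 = i + 1 ∧ i + 2 ≤ p.2 ∧ p.2 < x ∧ p.2 % 2 = i % 2) ∨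
      (x % 2 = i % 2 ∧ p.1 = i ∧ x + 1 ≤ p.2 ∧ p.2 ≤ n) ∨
      (¬ x % 2 = i % 2 ∧ p.1 = i + 1 ∧ x + 1 ≤ p.2 ∧ p.2 ≤ n) := by
  unfold Afam
  by_cases hx : x % 2 = i % 2 <;>
    simp only [hx, Set.mem_union, Set.mem_insert_iff, Set.mem_singleton_iff, Set.mem_setOf_eq,
      Prod.ext_iff, if_true, if_false, ite_true, ite_false, not_true, not_false_iff,
      true_and, false_and, or_false, false_or, or_assoc]

lemma afam_qmem {n i x : ℕ} (h1 : 1 ≤ i) (h2 : i + 1 ≤ n) (h3 : i < x) (h4 : x ≤ n) :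
    ∀ p ∈ Afam n i x, Qmem n p := by
  intro p hp
  rw [afam_mem] at hp
  refine ⟨?_, ?_, ?_⟩ <;> omega

lemma afam_antichain {n i x : ℕ} (h1 : 1 ≤ i) (h2 : i + 1 ≤ n) (h3 : i < x) (h4 : x ≤ n) :
    IsPrecAntichain n (Afam n i x) := by
  refine ⟨afam_qmem h1 h2 h3 h4, ?_⟩
  intro p hp q hq hne hprec
  have hrow := prec_row hprec
  have hfree := prec_nonfree hprec
  rw [afam_mem] at hp hq
  have hq1 : q.1 ≤ i + 1 := by omega
  have hp1 : p.1 = i := by omega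
  have hq1' : q.1 = p.1 + 1 := by omega
  obtain ⟨-, -, -, hd⟩ := prec_adj hprec hq1'
  rcases hd with h | ⟨m, hm1, hm2, l, hl1, hl2⟩ | ⟨m, hm1, hm2, hm3⟩ | ⟨m, hm1, hm2, l, hl1, hl2⟩ <;>
    omega

def afamF (i x : ℕ) (p : ℕ × ℕ) : ℕ := if p = (i, x) then 1 else p.2

lemma pair_ne {a b i x : ℕ} (h : ¬(a = i ∧ b = x)) : (a, b) ≠ (i, x) := by
  intro hc; rw [Prod.mk.injEq] at hc; exact h hc

lemma afam_finite {n i x : ℕ} : (Afam n i x).Finite := by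
  apply Set.Finite.subset
    (Set.Finite.prod (Set.finite_Icc 0 (n + x + i + 1)) (Set.finite_Icc 0 (n + x + i + 1)))
  intro p hp
  rw [afam_mem] at hp
  refine Set.mem_prod.mpr ⟨?_, ?_⟩ <;> simp only [Set.mem_Icc] <;> omega

lemma afam_ncard {n i x : ℕ} (h1 : 1 ≤ i) (h2 : i + 1 ≤ n) (h3 : i < x) (h4 : x ≤ n) :
    (Afam n i x).ncard = n := by
  have hinj : Set.InjOn (afamF i x) (Afam n i x) := by
    intro p hp q hq hfe
    by_cases hpx : p = (i, x) <;> by_cases hqx : q = (i, x)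
    · rw [hpx, hqx]
    · exfalso
      rw [afam_mem] at hq
      unfold afamF at hfe
      rw [if_pos hpx, if_neg hqx] at hfe
      omega
    · exfalso
      rw [afam_mem] at hp
      unfold afamF at hfe
      rw [if_neg hpx, if_pos hqx] at hfe
      omega
    · unfold afamF at hfe
      rw [if_neg hpx, if_neg hqx] at hfe
      rw [afam_mem] at hp hq
      have hpx' : ¬(p.1 = i ∧ p.2 = x) := fun h => hpx (Prod.ext h.1 h.2)
      have hqx' : ¬(q.1 = i ∧ q.2 = x) := fun h => hqx (Prod.ext h.1 h.2)
      have hh : p.1 = q.1 ∧ p.2 = q.2 := by omega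
      exact Prod.ext hh.1 hh.2
  have himg : afamF i x '' (Afam n i x) = Set.Icc 1 n := by
    apply Set.Subset.antisymm
    · rintro v ⟨p, hp, rfl⟩
      rw [afam_mem] at hp
      have hpx' : p = (i, x) ∨ ¬(p.1 = i ∧ p.2 = x) := by
        by_cases h : p = (i, x)
        · exact Or.inl h
        · exact Or.inr fun hc => h (Prod.ext hc.1 hc.2)
      unfold afamF
      split_ifs with h
      · simp only [Set.mem_Icc]; omega
      · simp only [Set.mem_Icc]
        rcases hpx' with h' | h'
        · exact absurd h' h
        · omega
    · intro v hv
      simp only [Set.mem_Icc] at hv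
      have hcases : v = 1 ∨ (2 ≤ v ∧ v ≤ i) ∨
          (i + 1 ≤ v ∧ v < x ∧ v % 2 = (i + 1) % 2) ∨
          (i + 2 ≤ v ∧ v < x ∧ v % 2 = i % 2) ∨ v = x ∨ (x + 1 ≤ v ∧ v ≤ n) := by omega
      rcases hcases with rfl | hc | hc | hc | rfl | hc
      · exact ⟨(i, x), by rw [afam_mem]; omega, by unfold afamF; rw [if_pos rfl]⟩
      · refine ⟨(v - 1, v), by rw [afam_mem]; simp only [eq_self_iff_true, true_and, and_true, false_and, and_false, or_false, false_or, or_true, true_or] <;> omega, ?_⟩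
        unfold afamF
        rw [if_neg (pair_ne (by omega))]
      · refine ⟨(i, v), by rw [afam_mem]; simp only [eq_self_iff_true, true_and, and_true, false_and, and_false, or_false, false_or, or_true, true_or] <;> omega, ?_⟩
        unfold afamF
        rw [if_neg (pair_ne (by omega))]
      · refine ⟨(i + 1, v), by rw [afam_mem]; simp only [eq_self_iff_true, true_and, and_true, false_and, and_false, or_false, false_or, or_true, true_or] <;> omega, ?_⟩
        unfold afamF
        rw [if_neg (pair_ne (by omega))]
      · refine ⟨(i + 1, v), by rw [afam_mem]; simp only [eq_self_iff_true, true_and, and_true, false_and, and_false, or_false, false_or, or_true, true_or] <;> omega, ?_⟩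
        unfold afamF
        rw [if_neg (pair_ne (by omega))]
      · by_cases hx : x % 2 = i % 2
        · refine ⟨(i, v), by rw [afam_mem]; simp only [eq_self_iff_true, true_and, and_true, false_and, and_false, or_false, false_or, or_true, true_or] <;> omega, ?_⟩
          unfold afamF
          rw [if_neg (pair_ne (by omega))]
        · refine ⟨(i + 1, v), by rw [afam_mem]; simp only [eq_self_iff_true, true_and, and_true, false_and, and_false, or_false, false_or, or_true, true_or] <;> omega, ?_⟩
          unfold afamF
          rw [if_neg (pair_ne (by omega))]
  rw [← Set.ncard_image_of_injOn hinj, himg, ← Finset.coe_Icc, Set.ncard_coe_finset,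
    Nat.card_Icc]
  omega

lemma row1_sub {n : ℕ} : {p : ℕ × ℕ | p.1 = 1 ∧ 1 ≤ p.2 ∧ p.2 ≤ n} ⊆
    Set.Icc 0 1 ×ˢ Set.Icc 0 n := by
  rintro p ⟨h1, h2, h3⟩
  refine Set.mem_prod.mpr ⟨?_, ?_⟩ <;> simp only [Set.mem_Icc] <;> omega

lemma row1_finite {n : ℕ} : ({p : ℕ × ℕ | p.1 = 1 ∧ 1 ≤ p.2 ∧ p.2 ≤ n}).Finite :=
  Set.Finite.subset (Set.Finite.prod (Set.finite_Icc 0 1) (Set.finite_Icc 0 n)) row1_sub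

lemma row1_ncard {n : ℕ} : ({p : ℕ × ℕ | p.1 = 1 ∧ 1 ≤ p.2 ∧ p.2 ≤ n}).ncard = n := by
  have hinj : Set.InjOn Prod.snd {p : ℕ × ℕ | p.1 = 1 ∧ 1 ≤ p.2 ∧ p.2 ≤ n} := by
    rintro p ⟨hp1, -, -⟩ q ⟨hq1, -, -⟩ h
    exact Prod.ext (hp1.trans hq1.symm) h
  have himg : Prod.snd '' {p : ℕ × ℕ | p.1 = 1 ∧ 1 ≤ p.2 ∧ p.2 ≤ n} = Set.Icc 1 n := by
    apply Set.Subset.antisymm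
    · rintro v ⟨p, ⟨h1, h2, h3⟩, rfl⟩
      simp only [Set.mem_Icc]
      omega
    · intro v hv
      simp only [Set.mem_Icc] at hv
      exact ⟨(1, v), ⟨rfl, hv.1, hv.2⟩, rfl⟩
  rw [← Set.ncard_image_of_injOn hinj, himg, ← Finset.coe_Icc, Set.ncard_coe_finset, Nat.card_Icc]
  omega

lemma compat_arith {n i k ℓ : ℕ} (h1 : 1 ≤ i) (hk1 : i + 1 ≤ k) (hk2 : k ≤ n)
    (hl1 : i + 1 ≤ ℓ) (hl2 : ℓ ≤ n) (h : ¬ prec0 n (i, k) (i + 1, ℓ)) :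
    k = i + 1 ∨
    (k % 2 = i % 2 ∧ ℓ % 2 = i % 2 ∧ ℓ ≤ k) ∨
    (k % 2 = (i + 1) % 2 ∧ i + 3 ≤ k ∧ (k ≤ ℓ ∨ (ℓ % 2 = i % 2 ∧ ℓ < k))) := by
  by_contra hc
  apply h
  refine ⟨⟨h1, by omega, hk2⟩, ⟨by omega, by omega, hl2⟩, rfl, ?_⟩
  rcases Nat.even_or_odd (k - i) with ⟨m, hm⟩ | ⟨m, hm⟩
  · by_cases hbig : k + 1 ≤ ℓ
    · exact Or.inr (Or.inr (Or.inl ⟨(k - i) / 2, by omega, by omega, by omega⟩))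
    · exact Or.inr (Or.inl ⟨(k - i) / 2, by omega, by omega, (ℓ - i - 1) / 2, by omega, by omega⟩)
  · exact Or.inr (Or.inr (Or.inr ⟨(k - i - 1) / 2, by omega, by omega, (ℓ - i - 1) / 2,
      by omega, by omega⟩))

set_option maxHeartbeats 2000000 in
lemma classify {n : ℕ} (hn : 2 ≤ n) (A : Set (ℕ × ℕ)) (hA : IsPrecAntichain n A)
    (hcard : A.ncard = n) :
    A = {p : ℕ × ℕ | p.1 = 1 ∧ 1 ≤ p.2 ∧ p.2 ≤ n} ∨
      ∃ i x : ℕ, 1 ≤ i ∧ i ≤ n - 1 ∧ i < x ∧ x ≤ n ∧ A = Afam n i x := by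
  obtain ⟨hQ, hanti⟩ := hA
  have hfin : A.Finite := Set.finite_of_ncard_ne_zero (by omega)
  have hne : A.Nonempty := Set.nonempty_of_ncard_ne_zero (by omega)
  obtain ⟨q₀, hq₀, hqmax⟩ := Set.Finite.exists_maximalFor Prod.fst A hfin hne
  have hmax : ∀ p ∈ A, p.1 ≤ q₀.1 := by
    intro p hp
    by_contra h
    push_neg at h
    have := hqmax (j := p) hp (le_of_lt h)
    omega
  by_cases hJ : q₀.1 = 1
  · -- all of A in row 1
    left
    have hsub : A ⊆ {p : ℕ × ℕ | p.1 = 1 ∧ 1 ≤ p.2 ∧ p.2 ≤ n} := by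
      intro p hp
      obtain ⟨ha, hb, hc⟩ := hQ p hp
      have h2 := hmax p hp
      exact ⟨by omega, by omega, hc⟩
    exact Set.eq_of_subset_of_ncard_le hsub (by rw [row1_ncard, hcard]) row1_finite
  · right
    have hJ1 : 1 ≤ q₀.1 := (hQ q₀ hq₀).1
    obtain ⟨i, hJ2⟩ : ∃ i, q₀.1 = i + 1 := ⟨q₀.1 - 1, by omega⟩
    have hi1 : 1 ≤ i := by omega
    have hin : i + 1 ≤ n := by obtain ⟨a, b, c⟩ := hQ q₀ hq₀; omega
    -- low rows are free
    have hlow : ∀ p ∈ A, p.1 + 2 ≤ i + 1 → p.2 = p.1 + 1 := by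
      intro p hp h2
      by_contra hf
      exact hanti p hp q₀ hq₀ (by rintro rfl; omega)
        (prec_of_far (hQ p hp) (hQ q₀ hq₀) hf (by omega))
    have hdiag : (i, i) ∉ A := by
      intro hmem
      refine hanti (i, i) hmem q₀ hq₀ (by rintro rfl; simp at hJ2) ?_
      exact Relation.TransGen.single ⟨hQ _ hmem, hQ q₀ hq₀, by omega, Or.inl rfl⟩
    -- the three parts
    set A1 := A ∩ {p : ℕ × ℕ | p.1 < i} with hA1
    set A2 := A ∩ {p : ℕ × ℕ | p.1 = i} with hA2
    set A3 := A ∩ {p : ℕ × ℕ | p.1 = i + 1} with hA3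
    have hsplit : A = A1 ∪ A2 ∪ A3 := by
      ext p
      simp only [hA1, hA2, hA3, Set.mem_union, Set.mem_inter_iff, Set.mem_setOf_eq]
      constructor
      · intro hp
        have h1 := (hQ p hp).1
        have h2 := hmax p hp
        rcases Nat.lt_trichotomy p.1 i with h | h | h
        · exact Or.inl (Or.inl ⟨hp, h⟩)
        · exact Or.inl (Or.inr ⟨hp, h⟩)
        · exact Or.inr ⟨hp, by omega⟩
      · rintro ((⟨h, -⟩ | ⟨h, -⟩) | ⟨h, -⟩) <;> exact h
    set S := Prod.snd '' A2 with hS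
    set T := Prod.snd '' A3 with hT
    have hSmem : ∀ k ∈ S, (i, k) ∈ A := by
      rintro k ⟨p, ⟨hpA, hp1⟩, rfl⟩
      simp only [Set.mem_setOf_eq] at hp1
      have hpe : p = (i, p.2) := Prod.ext hp1 rfl
      rwa [← hpe]
    have hTmem : ∀ ℓ ∈ T, (i + 1, ℓ) ∈ A := by
      rintro ℓ ⟨p, ⟨hpA, hp1⟩, rfl⟩
      simp only [Set.mem_setOf_eq] at hp1
      have hpe : p = (i + 1, p.2) := Prod.ext hp1 rfl
      rwa [← hpe]
    have hSsub : S ⊆ Set.Icc (i + 1) n := by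
      intro k hk
      have hmem := hSmem k hk
      obtain ⟨a, b, c⟩ := hQ _ hmem
      have h2 : k ≠ i := fun h => hdiag (h ▸ hmem)
      simp only [Set.mem_Icc]
      constructor <;> omega
    have hTsub : T ⊆ Set.Icc (i + 1) n := by
      intro ℓ hl
      obtain ⟨a, b, c⟩ := hQ _ (hTmem ℓ hl)
      simp only [Set.mem_Icc]
      constructor <;> omega
    -- cardinalities
    have hfin1 : A1.Finite := hfin.subset (Set.inter_subset_left)
    have hfin2 : A2.Finite := hfin.subset (Set.inter_subset_left)
    have hfin3 : A3.Finite := hfin.subset (Set.inter_subset_left)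
    have hfinS : S.Finite := hfin2.image _
    have hfinT : T.Finite := hfin3.image _
    have hcard1 : A1.ncard ≤ i - 1 := by
      have hsub1 : A1 ⊆ (fun r => (r, r + 1)) '' Set.Icc 1 (i - 1) := by
        rintro p ⟨hp, hlt⟩
        have hfree := hlow p hp (by simp only [Set.mem_setOf_eq] at hlt; omega)
        have h1 := (hQ p hp).1
        refine ⟨p.1, by simp only [Set.mem_Icc]; simp only [Set.mem_setOf_eq] at hlt; omega, ?_⟩
        have hpe : p = (p.1, p.1 + 1) := Prod.ext rfl hfree
        exact hpe.symm
      calc A1.ncard ≤ ((fun r => (r, r + 1)) '' Set.Icc 1 (i - 1)).ncard :=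
            Set.ncard_le_ncard hsub1 ((Set.finite_Icc _ _).image _)
        _ ≤ (Set.Icc 1 (i - 1)).ncard := Set.ncard_image_le (Set.finite_Icc _ _)
        _ = i - 1 := by
            rw [← Finset.coe_Icc, Set.ncard_coe_finset, Nat.card_Icc]; omega
    have hcard2 : A2.ncard = S.ncard := by
      rw [hS]
      exact (Set.ncard_image_of_injOn (by
        rintro p ⟨-, hp1⟩ q ⟨-, hq1⟩ h
        simp only [Set.mem_setOf_eq] at hp1 hq1
        exact Prod.ext (hp1.trans hq1.symm) h)).symm
    have hcard3 : A3.ncard = T.ncard := by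
      rw [hT]
      exact (Set.ncard_image_of_injOn (by
        rintro p ⟨-, hp1⟩ q ⟨-, hq1⟩ h
        simp only [Set.mem_setOf_eq] at hp1 hq1
        exact Prod.ext (hp1.trans hq1.symm) h)).symm
    have hcount : n ≤ (i - 1) + (S.ncard + T.ncard) := by
      calc n = A.ncard := hcard.symm
        _ = (A1 ∪ A2 ∪ A3).ncard := by rw [← hsplit]
        _ ≤ (A1 ∪ A2).ncard + A3.ncard := Set.ncard_union_le _ _
        _ ≤ A1.ncard + A2.ncard + A3.ncard := by
            have := Set.ncard_union_le A1 A2; omega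
        _ ≤ (i - 1) + (S.ncard + T.ncard) := by omega
    have hunion : (S ∪ T).ncard ≤ n - i := by
      calc (S ∪ T).ncard ≤ (Set.Icc (i + 1) n).ncard :=
            Set.ncard_le_ncard (Set.union_subset hSsub hTsub) (Set.finite_Icc _ _)
        _ = n - i := by rw [← Finset.coe_Icc, Set.ncard_coe_finset, Nat.card_Icc]; omega
    have hint : (S ∩ T).ncard ≠ 0 := by
      have hsum := Set.ncard_union_add_ncard_inter S T hfinS hfinT
      have hSbound : S.ncard ≤ n - i :=
        le_trans (Set.ncard_le_ncard Set.subset_union_left (hfinS.union hfinT)) hunion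
      omega
    obtain ⟨x, hxS, hxT⟩ := Set.nonempty_of_ncard_ne_zero hint
    have hxIcc := hSsub hxS
    simp only [Set.mem_Icc] at hxIcc
    -- compatibility
    have hcompat : ∀ k ∈ S, ∀ ℓ ∈ T, ¬ prec0 n (i, k) (i + 1, ℓ) := by
      intro k hk ℓ hl h0
      exact hanti (i, k) (hSmem k hk) (i + 1, ℓ) (hTmem ℓ hl)
        (by simp [Prod.ext_iff]) (Relation.TransGen.single h0)
    refine ⟨i, x, hi1, by omega, by omega, by omega, ?_⟩
    have hsub : A ⊆ Afam n i x := by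
      intro p hp
      obtain ⟨ha, hb, hc⟩ := hQ p hp
      have hple := hmax p hp
      rw [afam_mem]
      rcases Nat.lt_trichotomy p.1 i with h | h | h
      · have hfree := hlow p hp (by omega)
        omega
      · have hkS : p.2 ∈ S := ⟨p, ⟨hp, h⟩, rfl⟩
        have hkIcc := hSsub hkS
        simp only [Set.mem_Icc] at hkIcc
        have hc1 := compat_arith hi1 hkIcc.1 hkIcc.2 hxIcc.1 hxIcc.2
          (hcompat p.2 hkS x hxT)
        omega
      · have h' : p.1 = i + 1 := by omega
        have hlT : p.2 ∈ T := ⟨p, ⟨hp, h'⟩, rfl⟩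
        have hlIcc := hTsub hlT
        simp only [Set.mem_Icc] at hlIcc
        have hc2 := compat_arith hi1 hxIcc.1 hxIcc.2 hlIcc.1 hlIcc.2
          (hcompat x hxS p.2 hlT)
        omega
    exact Set.eq_of_subset_of_ncard_le hsub
      (by rw [afam_ncard hi1 hin (by omega) (by omega), hcard]) afam_finite

/-- each `A(i,x)` is an antichain of cardinality `n` in `(Q_n, ≺)`, and
every antichain of cardinality `n` equals `{(1,k) : 1 ≤ k ≤ n}` or some `A(i,x)`. -/
theorem classification_of_antichains (n : ℕ) (hn : 2 ≤ n) :
    (∀ i x : ℕ, 1 ≤ i → i ≤ n - 1 → i < x → x ≤ n →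
      IsPrecAntichain n (Afam n i x) ∧ (Afam n i x).ncard = n) ∧
    (∀ A : Set (ℕ × ℕ), IsPrecAntichain n A → A.ncard = n →
      A = {p : ℕ × ℕ | p.1 = 1 ∧ 1 ≤ p.2 ∧ p.2 ≤ n} ∨
        ∃ i x : ℕ, 1 ≤ i ∧ i ≤ n - 1 ∧ i < x ∧ x ≤ n ∧ A = Afam n i x) := by
  constructor
  · intro i x h1 h2 h3 h4
    exact ⟨afam_antichain h1 (by omega) h3 h4, afam_ncard h1 (by omega) h3 h4⟩
  · intro A hA hcard
    exact classify hn A hA hcard
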